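/- Let X be a topological space, ω a weight function, V = {v_λ} a weight system on X satisfying (DN-tilde). Then the weight grid A_{(V_ω, V)} on ℝ^d × X given by a_{N,n}(t,x) = e^{Nω(t)}/v_{1/n}(x) satisfies condition (Q): ∀N ∃M ≥ N ∃n ∀K ≥ M ∀m ≥ n ∀ε > 0 ∃k ≥ m ∃C > 0 such that v_{1/m}(x)/e^{Mω(t)} ≤ ε·v_{1/n}(x)/e^{Nω(t)} + C·v_{1/k}(x)/e^{Kω(t)} for all (t,x). -/

import Mathlib

open Real Set Filter

/-- A weight function in the sense of Braun, Meise and Taylor. -/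
def IsWeightFunction (ω : ℝ → ℝ) : Prop :=
  MonotoneOn ω (Set.Ici 0) ∧ ContinuousOn ω (Set.Ici 0) ∧ ω 0 = 0 ∧
  (∀ t ≥ (0:ℝ), 0 ≤ ω t) ∧
  (∃ C > (0:ℝ), ∀ t ≥ (0:ℝ), ω (2 * t) ≤ C * ω t + C) ∧
  (∀ ε > (0:ℝ), ∃ T > (0:ℝ), ∀ t ≥ T, Real.log t ≤ ε * ω t) ∧
  ConvexOn ℝ (Set.Ici 0) (fun x => ω (Real.exp x))

/-- The Young conjugate `φ*(y) = sup_{x ≥ 0} (x y − φ(x))` of `φ(x) = ω(eˣ)`. -/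
noncomputable def YoungConj (ω : ℝ → ℝ) (y : ℝ) : ℝ :=
  sSup ((fun x => x * y - ω (Real.exp x)) '' Set.Ici 0)


/-- A weight system `{v_λ : λ > 0}` on `X`: continuous, `≥ 1`, decreasing in `λ`. -/
def IsWeightSystem {X : Type*} [TopologicalSpace X] (v : ℝ → X → ℝ) : Prop :=
  (∀ lam : ℝ, 0 < lam → Continuous (v lam)) ∧
  (∀ lam : ℝ, 0 < lam → ∀ x, 1 ≤ v lam x) ∧
  (∀ μ lam : ℝ, 0 < μ → μ ≤ lam → ∀ x, v lam x ≤ v μ x)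


lemma geom_le_sum (a b θ : ℝ) (ha : 0 ≤ a) (hb : 0 ≤ b) (hθ0 : 0 ≤ θ) (hθ1 : θ ≤ 1) :
    a ^ θ * b ^ (1 - θ) ≤ a + b := by
  have h1 : 0 ≤ 1 - θ := by linarith
  have hmax : 0 ≤ max a b := le_trans ha (le_max_left _ _)
  calc a ^ θ * b ^ (1 - θ) ≤ (max a b) ^ θ * (max a b) ^ (1 - θ) := by
        gcongr
        · exact le_max_left _ _
        · exact le_max_right _ _
    _ = max a b := by
        rw [← Real.rpow_add' hmax (by norm_num), add_sub_cancel, Real.rpow_one]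
    _ ≤ a + b := max_le (le_add_of_nonneg_right hb) (le_add_of_nonneg_left ha)

/-- If `V` satisfies (DN-tilde), then the weight grid `A_{(V_ω, V)}` on `ℝ^d × X`,
`a_{N,n}(t,x) = e^{Nω(t)}/v_{1/n}(x)`, satisfies condition (Q). -/
theorem DNtilde_implies_Q (d : ℕ) (X : Type*) [TopologicalSpace X]
    (ω : ℝ → ℝ) (hω : IsWeightFunction ω)
    (v : ℝ → X → ℝ) (hv : IsWeightSystem v)
    (hDN : ∃ lam > (0:ℝ), ∀ μ : ℝ, 0 < μ → μ ≤ lam → ∀ θ : ℝ, 0 < θ → θ < 1 →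
      ∃ ν : ℝ, 0 < ν ∧ ν ≤ μ ∧ ∃ C > (0:ℝ), ∀ x : X,
        v μ x ≤ C * (v lam x) ^ θ * (v ν x) ^ (1 - θ)) :
    ∀ N : ℕ, ∃ M : ℕ, N ≤ M ∧ ∃ n : ℕ, 1 ≤ n ∧ ∀ K : ℕ, M ≤ K → ∀ m : ℕ, n ≤ m →
      ∀ ε > (0:ℝ), ∃ k : ℕ, m ≤ k ∧ ∃ C > (0:ℝ),
        ∀ (t : EuclideanSpace ℝ (Fin d)) (x : X),
          v (1 / (m:ℝ)) x / Real.exp ((M:ℝ) * ω ‖t‖) ≤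
            ε * (v (1 / (n:ℝ)) x / Real.exp ((N:ℝ) * ω ‖t‖)) +
              C * (v (1 / (k:ℝ)) x / Real.exp ((K:ℝ) * ω ‖t‖)) := by
  obtain ⟨hvcont, hv1, hvmono⟩ := hv
  obtain ⟨lam, hlam, hDN'⟩ := hDN
  obtain ⟨hmono, hcont, hω0, hωnn, hrest⟩ := hω
  intro N
  refine ⟨N + 1, by omega, max 1 ⌈1 / lam⌉₊, le_max_left _ _, ?_⟩
  set n : ℕ := max 1 ⌈1 / lam⌉₊ with hn
  have hn1 : 1 ≤ n := le_max_left _ _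
  have hnpos : (0:ℝ) < (n:ℝ) := by exact_mod_cast hn1
  have hnlam : 1 / (n:ℝ) ≤ lam := by
    rw [one_div_le hnpos hlam]
    calc 1 / lam ≤ (⌈1 / lam⌉₊ : ℝ) := Nat.le_ceil _
      _ ≤ (n:ℝ) := by exact_mod_cast le_max_right 1 ⌈1 / lam⌉₊
  intro K hK m hm ε hε
  have hmpos : (0:ℝ) < (m:ℝ) := lt_of_lt_of_le hnpos (by exact_mod_cast hm)
  have hmlam : 1 / (m:ℝ) ≤ lam :=
    le_trans (one_div_le_one_div_of_le hnpos (by exact_mod_cast hm)) hnlam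
  by_cases hKM : K = N + 1
  · refine ⟨m, le_refl _, 1, one_pos, ?_⟩
    intro t x
    subst hKM
    have hA : 0 ≤ ε * (v (1 / (n:ℝ)) x / Real.exp ((N:ℝ) * ω ‖t‖)) := by
      have h1 : (1:ℝ) ≤ v (1 / (n:ℝ)) x := hv1 _ (by positivity) x
      have := Real.exp_pos ((N:ℝ) * ω ‖t‖)
      positivity
    rw [one_mul]
    linarith
  · have hKN2 : N + 2 ≤ K := by omega
    have hKNr : (N:ℝ) + 2 ≤ (K:ℝ) := by exact_mod_cast hKN2
    set θ : ℝ := ((K:ℝ) - ((N:ℝ) + 1)) / ((K:ℝ) - (N:ℝ)) with hθdef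
    have hden : (0:ℝ) < (K:ℝ) - (N:ℝ) := by linarith
    have hθ0 : 0 < θ := div_pos (by linarith) hden
    have hθ1 : θ < 1 := (div_lt_one hden).2 (by linarith)
    have h1θ : 0 < 1 - θ := by linarith
    obtain ⟨ν, hν0, hνm, C₀, hC₀, hineq⟩ :=
      hDN' (1 / (m:ℝ)) (by positivity) hmlam θ hθ0 hθ1
    refine ⟨max m ⌈1 / ν⌉₊, le_max_left _ _, ?_⟩
    set k : ℕ := max m ⌈1 / ν⌉₊ with hk
    have hkpos : (0:ℝ) < (k:ℝ) :=
      lt_of_lt_of_le hmpos (by exact_mod_cast le_max_left m ⌈1 / ν⌉₊)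
    have hkν : 1 / (k:ℝ) ≤ ν := by
      rw [one_div_le hkpos hν0]
      calc 1 / ν ≤ (⌈1 / ν⌉₊ : ℝ) := Nat.le_ceil _
        _ ≤ (k:ℝ) := by exact_mod_cast le_max_right m ⌈1 / ν⌉₊
    have hεθ : (0:ℝ) < ε ^ θ := Real.rpow_pos_of_pos hε θ
    refine ⟨(C₀ / ε ^ θ) ^ (1 / (1 - θ)), Real.rpow_pos_of_pos (by positivity) _, ?_⟩
    set C : ℝ := (C₀ / ε ^ θ) ^ (1 / (1 - θ)) with hCdef
    have hCpos : 0 < C := Real.rpow_pos_of_pos (by positivity) _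
    have hC1θ : C ^ (1 - θ) = C₀ / ε ^ θ := by
      rw [hCdef, ← Real.rpow_mul (by positivity), one_div_mul_cancel (ne_of_gt h1θ),
        Real.rpow_one]
    intro t x
    set w : ℝ := ω ‖t‖ with hw
    have hwnn : 0 ≤ w := hωnn _ (norm_nonneg t)
    have hvn : (0:ℝ) < v (1 / (n:ℝ)) x := lt_of_lt_of_le one_pos (hv1 _ (by positivity) x)
    have hvk : (0:ℝ) < v (1 / (k:ℝ)) x := lt_of_lt_of_le one_pos (hv1 _ (by positivity) x)
    have hvlam : (0:ℝ) ≤ v lam x := le_trans zero_le_one (hv1 _ hlam x)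
    have hvν : (0:ℝ) ≤ v ν x := le_trans zero_le_one (hv1 _ hν0 x)
    set A : ℝ := v (1 / (n:ℝ)) x / Real.exp ((N:ℝ) * w) with hA
    set B : ℝ := v (1 / (k:ℝ)) x / Real.exp ((K:ℝ) * w) with hB
    have hApos : 0 < A := div_pos hvn (Real.exp_pos _)
    have hBpos : 0 < B := div_pos hvk (Real.exp_pos _)
    have step1 : v (1 / (m:ℝ)) x ≤ C₀ * (v (1 / (n:ℝ)) x) ^ θ * (v (1 / (k:ℝ)) x) ^ (1 - θ) := by
      refine le_trans (hineq x) ?_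
      gcongr
      · exact hvmono (1 / (n:ℝ)) lam (by positivity) hnlam x
      · exact hvmono (1 / (k:ℝ)) ν (by positivity) hkν x
    have expid : Real.exp ((N:ℝ) * w) ^ θ * Real.exp ((K:ℝ) * w) ^ (1 - θ)
        = Real.exp (((N:ℝ) + 1) * w) := by
      rw [← Real.exp_mul, ← Real.exp_mul, ← Real.exp_add]
      congr 1
      have hne : (K:ℝ) - (N:ℝ) ≠ 0 := ne_of_gt hden
      field_simp [hθdef]
      have hθK : θ * ((K:ℝ) - N) = (K:ℝ) - ((N:ℝ) + 1) := by
        rw [hθdef]; exact div_mul_cancel₀ _ hne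
      clear_value θ
      linear_combination (-w) * hθK
    have hAB : A ^ θ * B ^ (1 - θ)
        = (v (1 / (n:ℝ)) x) ^ θ * (v (1 / (k:ℝ)) x) ^ (1 - θ) / Real.exp (((N:ℝ) + 1) * w) := by
      rw [hA, hB, Real.div_rpow (le_of_lt hvn) (Real.exp_pos _).le,
        Real.div_rpow (le_of_lt hvk) (Real.exp_pos _).le, div_mul_div_comm, expid]
    have key : C₀ * (A ^ θ * B ^ (1 - θ)) = (ε * A) ^ θ * (C * B) ^ (1 - θ) := by
      rw [Real.mul_rpow hε.le hApos.le, Real.mul_rpow hCpos.le hBpos.le, hC1θ]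
      field_simp
    have main : v (1 / (m:ℝ)) x / Real.exp (((N:ℝ) + 1) * w) ≤ ε * A + C * B := by
      calc v (1 / (m:ℝ)) x / Real.exp (((N:ℝ) + 1) * w)
          ≤ C₀ * (v (1 / (n:ℝ)) x) ^ θ * (v (1 / (k:ℝ)) x) ^ (1 - θ)
              / Real.exp (((N:ℝ) + 1) * w) := by
            exact (div_le_div_iff_of_pos_right (Real.exp_pos _)).2 step1
        _ = C₀ * (A ^ θ * B ^ (1 - θ)) := by rw [hAB]; ring
        _ = (ε * A) ^ θ * (C * B) ^ (1 - θ) := key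
        _ ≤ ε * A + C * B :=
            geom_le_sum _ _ θ (by positivity) (by positivity) hθ0.le hθ1.le
    have hcast : ((N + 1 : ℕ) : ℝ) = (N:ℝ) + 1 := by push_cast; ring
    rw [hcast]
    exact main
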